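/- Let V > 0, r_d > 0, k > 0 and let r, θ : ℝ → ℝ be differentiable functions satisfying for all t ≥ 0: r(t) ≥ r_d, r(t) is bounded on bounded intervals, r'(t) = −V·cos θ(t), and θ'(t) = 2·k·r(t)·V·(cos θ(t) − √(1 − (r_d/r(t))²)) + V·sin θ(t)/r(t). Then there exists t* ≥ 0 such that sin θ(t) ≥ 0 for all t ≥ t* (i.e., the bearing angle, taken modulo 2π, lies in [0, π] for all t ≥ t*). -/

import Mathlib

open Real Set Filter Topology

lemma barrier {f : ℝ → ℝ} {a B : ℝ}
    (hc : ContinuousOn f (Set.Ici a))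
    (ha : f a ≤ B)
    (hd : ∀ t, a ≤ t → f t = B → ∃ d, d < 0 ∧ HasDerivAt f d t) :
    ∀ t, a ≤ t → f t ≤ B := by
  by_contra h
  push_neg at h
  obtain ⟨t1, ht1, hft1⟩ := h
  set S : Set ℝ := {t | t ∈ Set.Icc a t1 ∧ f t ≤ B} with hSdef
  have haS : a ∈ S := ⟨⟨le_refl a, ht1⟩, ha⟩
  have hne : S.Nonempty := ⟨a, haS⟩
  have hbd : BddAbove S := ⟨t1, fun x hx => hx.1.2⟩
  set u := sSup S with hu
  have huIcc : u ∈ Set.Icc a t1 :=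
    ⟨le_csSup hbd haS, csSup_le hne fun x hx => hx.1.2⟩
  have hgt : ∀ t, u < t → t ≤ t1 → B < f t := by
    intro t hut htt1
    by_contra hle
    push_neg at hle
    exact absurd (le_csSup hbd ⟨⟨huIcc.1.trans hut.le, htt1⟩, hle⟩) (not_le.mpr hut)
  have hcu : ContinuousWithinAt f (Set.Ici a) u := hc u huIcc.1
  have huclS : u ∈ closure S := (isLUB_csSup hne hbd).mem_closure hne
  have hfS : Filter.Tendsto f (𝓝[S] u) (𝓝 (f u)) :=
    (hcu.mono (fun x hx => hx.1.1)).tendsto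
  have hNB : (𝓝[S] u).NeBot := mem_closure_iff_nhdsWithin_neBot.mp huclS
  have hfuB : f u ≤ B :=
    le_of_tendsto hfS (eventually_mem_nhdsWithin.mono (fun x hx => hx.2))
  have hut1 : u < t1 :=
    lt_of_le_of_ne huIcc.2 (by intro heq; rw [heq] at hfuB; exact absurd hfuB (not_le.mpr hft1))
  have hIocmem : Set.Ioc u t1 ∈ 𝓝[>] u := Ioc_mem_nhdsGT_of_mem ⟨le_refl u, hut1⟩
  have hcur : Filter.Tendsto f (𝓝[>] u) (𝓝 (f u)) :=
    (hcu.mono (fun x hx => huIcc.1.trans (le_of_lt hx))).tendsto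
  have hfuB' : f u = B := by
    refine le_antisymm hfuB (ge_of_tendsto hcur ?_)
    filter_upwards [hIocmem] with t ht
    exact (hgt t ht.1 ht.2).le
  obtain ⟨d, hd0, hder⟩ := hd u huIcc.1 hfuB'
  have hslope : ∀ᶠ t in 𝓝[≠] u, slope f u t < 0 :=
    (hasDerivAt_iff_tendsto_slope.mp hder).eventually_lt_const hd0
  have hslope' : ∀ᶠ t in 𝓝[>] u, slope f u t < 0 :=
    hslope.filter_mono (nhdsWithin_mono u (fun x hx => ne_of_gt hx))
  obtain ⟨t, hts, htIoc⟩ := (hslope'.and (eventually_of_mem hIocmem (fun x hx => hx))).exists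
  have htu : u < t := htIoc.1
  have : f t < f u := by
    have := hts
    rw [slope_def_field] at this
    have h1 : (f t - f u) < 0 := by
      have h2 : 0 < t - u := by linarith
      calc f t - f u = ((f t - f u) / (t - u)) * (t - u) := by field_simp
        _ < 0 := mul_neg_of_neg_of_pos this h2
    linarith
  exact absurd (hgt t htu htIoc.2) (by rw [hfuB'] at this; exact not_lt.mpr this.le)

set_option maxHeartbeats 2000000 in
theorem bearing_eventually_in_upper_half
    (V r_d k : ℝ) (r θ : ℝ → ℝ)
    (hV : 0 < V) (hrd : 0 < r_d) (hk : 0 < k)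
    (hr : ∀ t, 0 ≤ t → r_d ≤ r t)
    (hbdd : ∀ a b : ℝ, ∃ M : ℝ, ∀ t ∈ Set.Icc a b, |r t| ≤ M)
    (hr' : ∀ t, 0 ≤ t → HasDerivAt r (-V * Real.cos (θ t)) t)
    (hθ' : ∀ t, 0 ≤ t → HasDerivAt θ
      (2 * k * r t * V * (Real.cos (θ t) - Real.sqrt (1 - (r_d / r t) ^ 2))
        + V * Real.sin (θ t) / r t) t) :
    ∃ tstar : ℝ, 0 ≤ tstar ∧ ∀ t, tstar ≤ t → 0 ≤ Real.sin (θ t) := by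
  have pi_pos := Real.pi_pos
  have hrpos : ∀ t, 0 ≤ t → 0 < r t := fun t ht => lt_of_lt_of_le hrd (hr t ht)
  have hθcont : ContinuousOn θ (Set.Ici 0) :=
    fun t ht => ((hθ' t ht).continuousAt).continuousWithinAt
  have hrcont : ContinuousOn r (Set.Ici 0) :=
    fun t ht => ((hr' t ht).continuousAt).continuousWithinAt
  have hs0 : ∀ t : ℝ, 0 ≤ Real.sqrt (1 - (r_d / r t) ^ 2) := fun t => Real.sqrt_nonneg _
  have hs_lt : ∀ t, 0 ≤ t → Real.sqrt (1 - (r_d / r t) ^ 2) < 1 := by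
    intro t ht
    rw [Real.sqrt_lt' one_pos]
    have := div_pos hrd (hrpos t ht)
    nlinarith
  -- Invariance: once sin θ ≥ 0, it stays ≥ 0
  have invar : ∀ t0, 0 ≤ t0 → 0 ≤ Real.sin (θ t0) → ∀ t, t0 ≤ t → 0 ≤ Real.sin (θ t) := by
    intro t0 ht0 hsin0 t ht
    have hb := barrier (f := fun t => -Real.sin (θ t)) (a := t0) (B := 0)
      (fun x hx => ((Real.continuous_sin.continuousAt.comp
        ((hθ' x (le_trans ht0 hx)).continuousAt)).neg).continuousWithinAt)
      (by simpa using hsin0)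
      ?_ t ht
    · have hb' : -Real.sin (θ t) ≤ 0 := hb
      linarith
    · intro t2 ht2 heq
      have ht2' : (0:ℝ) ≤ t2 := le_trans ht0 ht2
      have hsin : Real.sin (θ t2) = 0 := by simpa [neg_eq_zero] using heq
      refine ⟨-(Real.cos (θ t2) * (2 * k * r t2 * V *
        (Real.cos (θ t2) - Real.sqrt (1 - (r_d / r t2) ^ 2))
        + V * Real.sin (θ t2) / r t2)), ?_, ((hθ' t2 ht2').sin).neg⟩
      have hP : 0 < 2 * k * r t2 * V := by
        have := hrpos t2 ht2'; positivity
      have hslt := hs_lt t2 ht2'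
      have hsge := hs0 t2
      have hV0 : V * 0 / r t2 = 0 := by simp
      rcases Real.sin_eq_zero_iff_cos_eq.mp hsin with h1 | h1
      · rw [hsin, h1, hV0]
        nlinarith [mul_pos hP (sub_pos.mpr hslt)]
      · rw [hsin, h1, hV0]
        nlinarith [mul_pos hP (show (0:ℝ) < 1 + Real.sqrt (1 - (r_d / r t2) ^ 2) by linarith)]
  -- Reachability: sin θ becomes nonnegative at some time
  have hreach : ∃ t0, 0 ≤ t0 ∧ 0 ≤ Real.sin (θ t0) := by
    by_contra hno
    push_neg at hno
    -- hno : ∀ t0, 0 ≤ t0 → sin (θ t0) < 0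
    set m : ℤ := ⌊θ 0 / (2 * π)⌋ with hm
    have h2pi : (0:ℝ) < 2 * π := by linarith
    have hm1 : (m:ℝ) * (2 * π) ≤ θ 0 := by
      have := Int.floor_le (θ 0 / (2 * π))
      rw [← le_div_iff₀ h2pi] at *
      exact this
    have hm2 : θ 0 < ((m:ℝ) + 1) * (2 * π) := by
      have := Int.lt_floor_add_one (θ 0 / (2 * π))
      rw [← div_lt_iff₀ h2pi]
      exact_mod_cast this
    set φ : ℝ → ℝ := fun t => θ t - ((2 * (m:ℝ) + 1)) * π with hφ
    have hsinφ : ∀ t, Real.sin (φ t) = -Real.sin (θ t) := by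
      intro t
      have : φ t = (θ t - (m:ℝ) * (2 * π)) - π := by rw [hφ]; ring
      rw [this, Real.sin_sub_pi, Real.sin_sub_int_mul_two_pi]
    have hcosφ : ∀ t, Real.cos (φ t) = -Real.cos (θ t) := by
      intro t
      have : φ t = (θ t - (m:ℝ) * (2 * π)) - π := by rw [hφ]; ring
      rw [this, Real.cos_sub_pi, Real.cos_sub_int_mul_two_pi]
    have hsinφpos : ∀ t, 0 ≤ t → 0 < Real.sin (φ t) := by
      intro t ht
      rw [hsinφ]
      linarith [hno t ht]
    have hφ0a : 0 < φ 0 := by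
      by_contra h
      push_neg at h
      -- then θ 0 - m*(2π) ≤ π, but also ≥ 0, so sin θ 0 ≥ 0
      have hx1 : 0 ≤ θ 0 - (m:ℝ) * (2 * π) := by linarith
      have hx2 : θ 0 - (m:ℝ) * (2 * π) ≤ π := by
        have : φ 0 = (θ 0 - (m:ℝ) * (2 * π)) - π := by rw [hφ]; ring
        rw [this] at h; linarith
      have := Real.sin_nonneg_of_nonneg_of_le_pi hx1 hx2
      rw [Real.sin_sub_int_mul_two_pi] at this
      linarith [hno 0 le_rfl]
    have hφ0b : φ 0 < π := by
      have : φ 0 = θ 0 - (m:ℝ) * (2 * π) - π := by rw [hφ]; ring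
      rw [this]; linarith
    have hφcont : ContinuousOn φ (Set.Ici 0) := hθcont.sub continuousOn_const
    have hφmem : ∀ t, 0 ≤ t → 0 < φ t ∧ φ t < π := by
      intro t ht
      constructor
      · by_contra h
        push_neg at h
        have h0 : (0:ℝ) ∈ Set.Icc (φ t) (φ 0) := ⟨h, hφ0a.le⟩
        obtain ⟨t', ht', heq⟩ := intermediate_value_Icc' ht
          (hφcont.mono (fun x hx => hx.1)) h0
        have := hsinφpos t' ht'.1
        rw [heq] at this; simp at this
      · by_contra h
        push_neg at h
        have h0 : π ∈ Set.Icc (φ 0) (φ t) := ⟨hφ0b.le, h⟩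
        obtain ⟨t', ht', heq⟩ := intermediate_value_Icc ht
          (hφcont.mono (fun x hx => hx.1)) h0
        have := hsinφpos t' ht'.1
        rw [heq] at this
        simp [Real.sin_pi] at this
    have hφderiv : ∀ t, 0 ≤ t → HasDerivAt φ
        (2 * k * r t * V * (Real.cos (θ t) - Real.sqrt (1 - (r_d / r t) ^ 2))
          + V * Real.sin (θ t) / r t) t :=
      fun t ht => (hθ' t ht).sub_const _
    -- Step: φ stays above π/3
    have hφ13 : ∀ t, 0 ≤ t → π / 3 < φ t := by
      by_contra h
      push_neg at h
      obtain ⟨t0, ht0, hle⟩ := h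
      have hbar := barrier (f := φ) (a := t0) (B := π / 3)
        (hφcont.mono (fun x hx => le_trans ht0 hx)) hle ?_
      · -- φ decreases linearly below π/3 forever, contradiction with φ > 0
        set c0 : ℝ := k * r_d * V with hc0def
        have hc0 : 0 < c0 := by positivity
        have hanti : AntitoneOn (fun t => φ t + c0 * t) (Set.Ici t0) := by
          apply antitoneOn_of_hasDerivWithinAt_nonpos (convex_Ici t0)
            (f' := fun x => (2 * k * r x * V *
              (Real.cos (θ x) - Real.sqrt (1 - (r_d / r x) ^ 2))
              + V * Real.sin (θ x) / r x) + c0)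
            (((hφcont.mono (fun x hx => le_trans ht0 hx)).add
              (continuousOn_const.mul continuousOn_id)))
          · intro x hx
            rw [interior_Ici] at hx
            have hx0 : (0:ℝ) ≤ x := le_trans ht0 (le_of_lt hx)
            have := (hφderiv x hx0).add (((hasDerivAt_id x).const_mul c0))
            rw [mul_one] at this
            exact this.hasDerivWithinAt
          · intro x hx
            rw [interior_Ici] at hx
            have hx0 : (0:ℝ) ≤ x := le_trans ht0 (le_of_lt hx)
            have hφx := (hφmem x hx0).1
            have hφxle : φ x ≤ π / 3 := hbar x (le_of_lt hx)
            have hcosle : Real.cos (π / 3) ≤ Real.cos (φ x) :=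
              Real.cos_le_cos_of_nonneg_of_le_pi hφx.le (by linarith) hφxle
            rw [Real.cos_pi_div_three] at hcosle
            have hcosθ : Real.cos (θ x) ≤ -(1/2) := by
              have := hcosφ x; nlinarith
            have hsinθ : Real.sin (θ x) < 0 := hno x hx0
            have hrx := hrpos x hx0
            have h1 : V * Real.sin (θ x) / r x ≤ 0 :=
              div_nonpos_of_nonpos_of_nonneg (by nlinarith) hrx.le
            have h2 : 2 * k * r x * V * (Real.cos (θ x)
                - Real.sqrt (1 - (r_d / r x) ^ 2)) ≤ 2 * k * r x * V * (-(1/2)) := by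
              apply mul_le_mul_of_nonneg_left _ (by positivity)
              linarith [hs0 x]
            have h3 : k * V * r_d ≤ k * V * r x :=
              mul_le_mul_of_nonneg_left (hr x hx0) (le_of_lt (mul_pos hk hV))
            rw [hc0def]
            nlinarith
        have hT : t0 ≤ t0 + (π/3) / c0 + 1 := by
          have : 0 < (π/3) / c0 := by positivity
          linarith
        have hmono := hanti (Set.self_mem_Ici) (show t0 + (π/3)/c0 + 1 ∈ Set.Ici t0 from hT) hT
        have hφT := (hφmem (t0 + (π/3)/c0 + 1) (le_trans ht0 hT)).1
        have hexp : c0 * (t0 + (π/3)/c0 + 1) = c0 * t0 + π/3 + c0 := by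
          field_simp
        simp only at hmono
        linarith
      · -- barrier derivative condition at φ = π/3
        intro t2 ht2 heq
        have ht2' : (0:ℝ) ≤ t2 := le_trans ht0 ht2
        refine ⟨_, ?_, hφderiv t2 ht2'⟩
        have hcθ : Real.cos (θ t2) = -(1/2) := by
          have h := hcosφ t2
          rw [heq, Real.cos_pi_div_three] at h
          linarith
        have hsθ : Real.sin (θ t2) = -(Real.sqrt 3 / 2) := by
          have h := hsinφ t2
          rw [heq, Real.sin_pi_div_three] at h
          linarith
        rw [hcθ, hsθ]
        have hrt := hrpos t2 ht2'
        have hsq3 : 0 < Real.sqrt 3 := Real.sqrt_pos.mpr (by norm_num)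
        have h1 : V * -(Real.sqrt 3 / 2) / r t2 < 0 :=
          div_neg_of_neg_of_pos (by nlinarith) hrt
        have h2 : 2 * k * r t2 * V * (-(1/2) - Real.sqrt (1 - (r_d / r t2) ^ 2)) < 0 :=
          mul_neg_of_pos_of_neg (by positivity) (by linarith [hs0 t2])
        linarith
    -- Step: r is bounded above
    have hL : AntitoneOn (fun t => φ t + k * r t ^ 2) (Set.Ici 0) := by
      apply antitoneOn_of_hasDerivWithinAt_nonpos (convex_Ici 0)
        (f' := fun x => (2 * k * r x * V *
            (Real.cos (θ x) - Real.sqrt (1 - (r_d / r x) ^ 2))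
            + V * Real.sin (θ x) / r x)
          + k * (2 * r x ^ 1 * (-V * Real.cos (θ x))))
        (hφcont.add (continuousOn_const.mul
          (hrcont.pow 2)))
      · intro x hx
        rw [interior_Ici] at hx
        have hx0 : (0:ℝ) ≤ x := le_of_lt hx
        have := (hφderiv x hx0).add (((hr' x hx0).pow 2).const_mul k)
        convert this.hasDerivWithinAt using 1
        · rfl
        · rfl
        · rfl
        all_goals (push_cast; ring)
      · intro x hx
        rw [interior_Ici] at hx
        have hx0 : (0:ℝ) ≤ x := le_of_lt hx
        have heq : (2 * k * r x * V *
            (Real.cos (θ x) - Real.sqrt (1 - (r_d / r x) ^ 2))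
            + V * Real.sin (θ x) / r x)
          + k * (2 * r x ^ 1 * (-V * Real.cos (θ x)))
          = -(2 * k * r x * V * Real.sqrt (1 - (r_d / r x) ^ 2))
            + V * Real.sin (θ x) / r x := by ring
        rw [heq]
        have hrx := hrpos x hx0
        have h1 : V * Real.sin (θ x) / r x ≤ 0 :=
          div_nonpos_of_nonpos_of_nonneg (by nlinarith [hno x hx0]) hrx.le
        have h2 : 0 ≤ 2 * k * r x * V * Real.sqrt (1 - (r_d / r x) ^ 2) := by
          have := hs0 x; positivity
        linarith
    set R : ℝ := Real.sqrt ((φ 0 + k * r 0 ^ 2) / k) with hRdef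
    have hrbound : ∀ t, 0 ≤ t → r t ≤ R := by
      intro t ht
      have hmono := hL (Set.self_mem_Ici) (show t ∈ Set.Ici (0:ℝ) from ht) ht
      simp only at hmono
      have hφt := (hφmem t ht).1
      have hsq : r t ^ 2 ≤ (φ 0 + k * r 0 ^ 2) / k := by
        rw [le_div_iff₀ hk]
        linarith
      rw [hRdef, ← Real.sqrt_sq (hrpos t ht).le]
      exact Real.sqrt_le_sqrt hsq
    have hRrd : r_d ≤ R := le_trans (hr 0 le_rfl) (hrbound 0 le_rfl)
    have hRpos : 0 < R := lt_of_lt_of_le hrd hRrd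
    -- Final Lyapunov function with uniform decay
    set A : ℝ := 2 * R with hAdef
    have hApos : 0 < A := by positivity
    have hN : AntitoneOn (fun t => A * (φ t + k * r t ^ 2) + r t + (V/2) * t) (Set.Ici 0) := by
      apply antitoneOn_of_hasDerivWithinAt_nonpos (convex_Ici 0)
        (f' := fun x => A * ((2 * k * r x * V *
            (Real.cos (θ x) - Real.sqrt (1 - (r_d / r x) ^ 2))
            + V * Real.sin (θ x) / r x)
          + k * (2 * r x ^ 1 * (-V * Real.cos (θ x))))
          + (-V * Real.cos (θ x)) + (V/2))
        (((continuousOn_const.mul (hφcont.add (continuousOn_const.mul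
          (hrcont.pow 2)))).add
          (fun x hx => ((hr' x hx).continuousAt).continuousWithinAt)).add
          (continuousOn_const.mul continuousOn_id))
      · intro x hx
        rw [interior_Ici] at hx
        have hx0 : (0:ℝ) ≤ x := le_of_lt hx
        have hL' := ((hφderiv x hx0).add (((hr' x hx0).pow 2).const_mul k)).const_mul A
        have := (hL'.add (hr' x hx0)).add ((hasDerivAt_id x).const_mul (V/2))
        convert this.hasDerivWithinAt using 1
        · rfl
        · rfl
        · rfl
        all_goals (push_cast; ring)
      · intro x hx
        rw [interior_Ici] at hx
        have hx0 : (0:ℝ) ≤ x := le_of_lt hx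
        have hrx := hrpos x hx0
        have hrxR := hrbound x hx0
        have hφx1 := hφ13 x hx0
        have hφx2 := (hφmem x hx0).2
        have hLder : (2 * k * r x * V *
            (Real.cos (θ x) - Real.sqrt (1 - (r_d / r x) ^ 2))
            + V * Real.sin (θ x) / r x)
          + k * (2 * r x ^ 1 * (-V * Real.cos (θ x)))
          = -(2 * k * r x * V * Real.sqrt (1 - (r_d / r x) ^ 2))
            + V * Real.sin (θ x) / r x := by ring
        rw [hLder]
        have hs2 : 0 ≤ 2 * k * r x * V * Real.sqrt (1 - (r_d / r x) ^ 2) := by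
          have := hs0 x; positivity
        rcases le_or_gt (φ x) (2 * π / 3) with hcase | hcase
        · -- middle region : sin φ ≥ √3/2
          have habs : |π/2 - φ x| ≤ π/6 := by
            rw [abs_le]; constructor <;> [linarith; linarith]
          have hcos1 : Real.cos (π/6) ≤ Real.cos |π/2 - φ x| :=
            Real.cos_le_cos_of_nonneg_of_le_pi (abs_nonneg _) (by linarith) habs
          rw [Real.cos_abs, Real.cos_pi_div_two_sub, Real.cos_pi_div_six] at hcos1
          -- hcos1 : √3/2 ≤ sin (φ x)
          have hsφ := hsinφ x
          have hsinθeq : Real.sin (θ x) = -Real.sin (φ x) := by linarith [hsinφ x]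
          have hdiv : (Real.sqrt 3 / 2) / R ≤ Real.sin (φ x) / r x :=
            div_le_div₀ (by linarith [hsinφpos x hx0]) hcos1 hrx hrxR
          have hterm : V * Real.sin (θ x) / r x ≤ -(V * ((Real.sqrt 3 / 2) / R)) := by
            rw [hsinθeq]
            have : V * ((Real.sqrt 3 / 2) / R) ≤ V * (Real.sin (φ x) / r x) :=
              mul_le_mul_of_nonneg_left hdiv hV.le
            have heq2 : V * -Real.sin (φ x) / r x = -(V * (Real.sin (φ x) / r x)) := by
              ring
            rw [heq2]
            linarith
          have hAterm : A * (-(2 * k * r x * V * Real.sqrt (1 - (r_d / r x) ^ 2))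
              + V * Real.sin (θ x) / r x) ≤ A * (-(V * ((Real.sqrt 3 / 2) / R))) := by
            apply mul_le_mul_of_nonneg_left _ hApos.le
            linarith
          have hcalc : A * (-(V * ((Real.sqrt 3 / 2) / R))) = -(Real.sqrt 3 * V) := by
            rw [hAdef]
            field_simp
          have hcosθ : -V * Real.cos (θ x) ≤ V := by
            nlinarith [Real.neg_one_le_cos (θ x)]
          have hsqrt3 : (3:ℝ)/2 ≤ Real.sqrt 3 := by
            nlinarith [Real.sq_sqrt (show (0:ℝ) ≤ 3 by norm_num), Real.sqrt_nonneg 3]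
          rw [hcalc] at hAterm
          nlinarith
        · -- high region : cos φ ≤ -1/2
          have hcos23 : Real.cos (2 * π / 3) = -(1/2) := by
            rw [show (2 * π / 3) = π - π/3 by ring, Real.cos_pi_sub, Real.cos_pi_div_three]
          have hcosle : Real.cos (φ x) ≤ Real.cos (2 * π / 3) :=
            Real.cos_le_cos_of_nonneg_of_le_pi (by positivity) hφx2.le hcase.le
          rw [hcos23] at hcosle
          have hcosθ : (1:ℝ)/2 ≤ Real.cos (θ x) := by
            have := hcosφ x; nlinarith
          have h1 : V * Real.sin (θ x) / r x ≤ 0 :=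
            div_nonpos_of_nonpos_of_nonneg (by nlinarith [hno x hx0]) hrx.le
          have hAterm : A * (-(2 * k * r x * V * Real.sqrt (1 - (r_d / r x) ^ 2))
              + V * Real.sin (θ x) / r x) ≤ 0 :=
            mul_nonpos_of_nonneg_of_nonpos hApos.le (by linarith)
          nlinarith
    -- derive the contradiction : (V/2) * t ≤ N 0 for all t ≥ 0
    set C : ℝ := A * (φ 0 + k * r 0 ^ 2) + r 0 with hCdef
    have hC : 0 < C := by
      have := hrpos 0 le_rfl
      have := hφ0a
      positivity
    have hlow : ∀ t, 0 ≤ t → (V/2) * t ≤ C := by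
      intro t ht
      have hmono := hN (Set.self_mem_Ici) (show t ∈ Set.Ici (0:ℝ) from ht) ht
      simp only at hmono
      have hφt := (hφmem t ht).1
      have hrt := hrpos t ht
      have h1 : 0 ≤ A * (φ t + k * r t ^ 2) := by positivity
      have h2 : A * (φ t + k * r t ^ 2) + r t + V / 2 * t
          ≤ A * (φ 0 + k * r 0 ^ 2) + r 0 := by linarith
      rw [hCdef]
      clear_value C A R φ m
      linarith
    have ht1pos : (0:ℝ) ≤ 2 * C / V + 1 := by positivity
    have := hlow (2 * C / V + 1) ht1pos
    have hkey : (V/2) * (2 * C / V + 1) = C + V/2 := by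
      field_simp
    rw [hkey] at this
    linarith
  obtain ⟨t0, ht0, hsin0⟩ := hreach
  exact ⟨t0, ht0, invar t0 ht0 hsin0⟩
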